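/- arXiv:2605.04096 — 2 statements merged into one kernel-verified Lean document; each statement's English description precedes it below -/
import Mathlib

section
/- A linear map Φ : M_n(ℂ) → M_n(ℂ) is completely positive if and only if its Choi matrix J(Φ) is positive semidefinite. -/
open scoped ComplexOrder

open Matrix

/-- The induced map `id_k ⊗ Φ` on block matrices indexed by `Fin k × Fin n`. -/
def tensorExtend (n k : ℕ) (Φ : Matrix (Fin n) (Fin n) ℂ →ₗ[ℂ] Matrix (Fin n) (Fin n) ℂ)
    (M : Matrix (Fin k × Fin n) (Fin k × Fin n) ℂ) : Matrix (Fin k × Fin n) (Fin k × Fin n) ℂ :=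
  Matrix.of fun p q => Φ (Matrix.of fun i j => M (p.1, i) (q.1, j)) p.2 q.2

def IsCompletelyPositive (n : ℕ)
    (Φ : Matrix (Fin n) (Fin n) ℂ →ₗ[ℂ] Matrix (Fin n) (Fin n) ℂ) : Prop :=
  ∀ k : ℕ, 1 ≤ k → ∀ M : Matrix (Fin k × Fin n) (Fin k × Fin n) ℂ,
    M.PosSemidef → (tensorExtend n k Φ M).PosSemidef

def IsTracePreserving (n : ℕ)
    (Φ : Matrix (Fin n) (Fin n) ℂ →ₗ[ℂ] Matrix (Fin n) (Fin n) ℂ) : Prop :=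
  ∀ ρ : Matrix (Fin n) (Fin n) ℂ, (Φ ρ).trace = ρ.trace

def IsCPTP (n : ℕ)
    (Φ : Matrix (Fin n) (Fin n) ℂ →ₗ[ℂ] Matrix (Fin n) (Fin n) ℂ) : Prop :=
  IsCompletelyPositive n Φ ∧ IsTracePreserving n Φ

/-- Partial trace over the second tensor factor. -/
noncomputable def ptraceE (n m : ℕ) (M : Matrix (Fin n × Fin m) (Fin n × Fin m) ℂ) :
    Matrix (Fin n) (Fin n) ℂ :=
  Matrix.of fun i j => ∑ k : Fin m, M (i, k) (j, k)

/-- `ρ ⊗ |ω⟩⟨ω|` on `ℂ^n ⊗ ℂ^m`. -/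
def tensorState (n m : ℕ) (ρ : Matrix (Fin n) (Fin n) ℂ) (ω : Fin m → ℂ) :
    Matrix (Fin n × Fin m) (Fin n × Fin m) ℂ :=
  Matrix.of fun p q => ρ p.1 q.1 * (ω p.2 * star (ω q.2))

def IsUnitVec {m : ℕ} (ω : Fin m → ℂ) : Prop := ∑ k, star (ω k) * ω k = 1

def IsUnitaryMat {d : Type*} [Fintype d] [DecidableEq d] (U : Matrix d d ℂ) : Prop :=
  Uᴴ * U = 1 ∧ U * Uᴴ = 1

/-- The Choi matrix `J(Φ) = Σ_{i,j} E_{ij} ⊗ Φ(E_{ij})`. -/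
noncomputable def choiMatrix (n : ℕ)
    (Φ : Matrix (Fin n) (Fin n) ℂ →ₗ[ℂ] Matrix (Fin n) (Fin n) ℂ) :
    Matrix (Fin n × Fin n) (Fin n × Fin n) ℂ :=
  Matrix.of fun p q => Φ (Matrix.single p.1 q.1 1) p.2 q.2

section auxSC
variable {M : Type*} [AddCommMonoid M]
variable {α β γ δ ε ζ η θ : Type*} [Fintype α] [Fintype β] [Fintype γ] [Fintype δ]
  [Fintype ε] [Fintype ζ] [Fintype η] [Fintype θ]

lemma sc2 (f : α → β → M) : ∑ a, ∑ b, f a b = ∑ b, ∑ a, f a b := Finset.sum_comm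

lemma sc3 (f : α → β → γ → M) :
    ∑ a, ∑ b, ∑ c, f a b c = ∑ c, ∑ a, ∑ b, f a b c :=
  (Finset.sum_congr rfl fun a _ => sc2 (f a)).trans Finset.sum_comm

lemma sc4 (f : α → β → γ → δ → M) :
    ∑ a, ∑ b, ∑ c, ∑ d, f a b c d = ∑ d, ∑ a, ∑ b, ∑ c, f a b c d :=
  (Finset.sum_congr rfl fun a _ => sc3 (f a)).trans Finset.sum_comm

lemma sc5 (f : α → β → γ → δ → ε → M) :
    ∑ a, ∑ b, ∑ c, ∑ d, ∑ e, f a b c d e = ∑ e, ∑ a, ∑ b, ∑ c, ∑ d, f a b c d e :=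
  (Finset.sum_congr rfl fun a _ => sc4 (f a)).trans Finset.sum_comm

lemma sc6 (f : α → β → γ → δ → ε → ζ → M) :
    ∑ a, ∑ b, ∑ c, ∑ d, ∑ e, ∑ g, f a b c d e g
      = ∑ g, ∑ a, ∑ b, ∑ c, ∑ d, ∑ e, f a b c d e g :=
  (Finset.sum_congr rfl fun a _ => sc5 (f a)).trans Finset.sum_comm

lemma sc7 (f : α → β → γ → δ → ε → ζ → η → M) :
    ∑ a, ∑ b, ∑ c, ∑ d, ∑ e, ∑ g, ∑ h, f a b c d e g h
      = ∑ h, ∑ a, ∑ b, ∑ c, ∑ d, ∑ e, ∑ g, f a b c d e g h :=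
  (Finset.sum_congr rfl fun a _ => sc6 (f a)).trans Finset.sum_comm

lemma sc8 (f : α → β → γ → δ → ε → ζ → η → θ → M) :
    ∑ a, ∑ b, ∑ c, ∑ d, ∑ e, ∑ g, ∑ h, ∑ t, f a b c d e g h t
      = ∑ t, ∑ a, ∑ b, ∑ c, ∑ d, ∑ e, ∑ g, ∑ h, f a b c d e g h t :=
  (Finset.sum_congr rfl fun a _ => sc7 (f a)).trans Finset.sum_comm
end auxSC

lemma phi_apply (n : ℕ) (Φ : Matrix (Fin n) (Fin n) ℂ →ₗ[ℂ] Matrix (Fin n) (Fin n) ℂ)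
    (A : Matrix (Fin n) (Fin n) ℂ) (x y : Fin n) :
    Φ A x y = ∑ i, ∑ j, A i j * choiMatrix n Φ (i, x) (j, y) := by
  conv_lhs => rw [matrix_eq_sum_single A]
  rw [map_sum]
  simp only [Matrix.sum_apply]
  refine Finset.sum_congr rfl fun i _ => ?_
  rw [map_sum]
  simp only [Matrix.sum_apply]
  refine Finset.sum_congr rfl fun j _ => ?_
  have h : Matrix.single i j (A i j) = A i j • Matrix.single i j 1 := by
    rw [smul_single, smul_eq_mul, mul_one]
  rw [h, _root_.map_smul]
  simp [choiMatrix]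

lemma key_quad (n k : ℕ) (Φ : Matrix (Fin n) (Fin n) ℂ →ₗ[ℂ] Matrix (Fin n) (Fin n) ℂ)
    (M B : Matrix (Fin k × Fin n) (Fin k × Fin n) ℂ)
    (hMe : ∀ p q, M p q = ∑ r, star (B r p) * B r q)
    (v : Fin k × Fin n → ℂ) :
    star v ⬝ᵥ (tensorExtend n k Φ M) *ᵥ v
      = ∑ r, star (fun ix : Fin n × Fin n => ∑ a, B r (a, ix.1) * v (a, ix.2)) ⬝ᵥ
          choiMatrix n Φ *ᵥ (fun jy : Fin n × Fin n => ∑ b, B r (b, jy.1) * v (b, jy.2)) := by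
  simp only [dotProduct, mulVec, tensorExtend, Matrix.of_apply, Pi.star_apply, phi_apply,
    hMe, star_sum, star_mul', Fintype.sum_prod_type, Finset.mul_sum, Finset.sum_mul]
  conv_lhs =>
    rw [sc8, sc8]
    enter [2, r1, 2, r2]
    rw [sc6, sc6]
    enter [2, i]
    rw [sc5, sc5, sc5]
    enter [2, x]
    rw [sc4, sc4]
    enter [2, j]
    rw [sc3]
    enter [2, y]
    rw [sc2]
  refine Finset.sum_congr rfl fun r1 _ => Finset.sum_congr rfl fun r2 _ =>
    Finset.sum_congr rfl fun i _ => Finset.sum_congr rfl fun x _ =>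
    Finset.sum_congr rfl fun j _ => Finset.sum_congr rfl fun y _ =>
    Finset.sum_congr rfl fun b _ => Finset.sum_congr rfl fun a _ => by ring

set_option maxHeartbeats 1000000 in
theorem completely_positive_iff_choi_posSemidef (n : ℕ)
    (Φ : Matrix (Fin n) (Fin n) ℂ →ₗ[ℂ] Matrix (Fin n) (Fin n) ℂ) :
    IsCompletelyPositive n Φ ↔ (choiMatrix n Φ).PosSemidef := by
  constructor
  · intro h
    rcases Nat.eq_zero_or_pos n with hn | hn
    · subst hn
      refine ⟨?_, fun x => ?_⟩
      · ext p q
        exact p.1.elim0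
      · simp [Finsupp.sum, Finset.eq_empty_of_isEmpty x.support]
    · set Ω : Fin n × Fin n → ℂ := fun z => if z.1 = z.2 then 1 else 0 with hΩ
      have hPSD : (Matrix.vecMulVec Ω (star Ω)).PosSemidef := by
        have hrw : Matrix.vecMulVec Ω (star Ω)
            = (Matrix.replicateRow Unit (star Ω))ᴴ * Matrix.replicateRow Unit (star Ω) := by
          rw [conjTranspose_replicateRow, star_star, ← vecMulVec_eq Unit]
        rw [hrw]
        exact posSemidef_conjTranspose_mul_self (Matrix.replicateRow Unit (star Ω))
      have hT := h n hn (Matrix.vecMulVec Ω (star Ω)) hPSD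
      have hmat : ∀ a b : Fin n,
          (Matrix.of fun i j => Matrix.vecMulVec Ω (star Ω) (a, i) (b, j))
            = Matrix.single a b (1 : ℂ) := by
        intro a b
        ext i j
        simp only [Matrix.of_apply, Matrix.vecMulVec_apply, hΩ, Matrix.single,
          Pi.star_apply]
        by_cases h1 : a = i <;> by_cases h2 : b = j <;> simp [h1, h2]
      have heq : tensorExtend n n Φ (Matrix.vecMulVec Ω (star Ω)) = choiMatrix n Φ := by
        ext p q
        simp only [tensorExtend, choiMatrix, Matrix.of_apply, hmat]
      rwa [heq] at hT
  · intro hC k hk M hM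
    obtain ⟨B, hB⟩ : ∃ B : Matrix (Fin k × Fin n) (Fin k × Fin n) ℂ, M = Bᴴ * B := by
      classical
      open scoped MatrixOrder in
      obtain ⟨B, hB⟩ := CStarAlgebra.nonneg_iff_eq_star_mul_self.mp hM.nonneg
      exact ⟨B, by rw [hB, star_eq_conjTranspose]⟩
    have hMe : ∀ p q, M p q = ∑ r, star (B r p) * B r q := by
      intro p q
      rw [hB, Matrix.mul_apply]
      simp [Matrix.conjTranspose_apply]
    rw [posSemidef_iff_dotProduct_mulVec]
    constructor
    · ext p q
      rw [Matrix.conjTranspose_apply]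
      simp only [tensorExtend, Matrix.of_apply, phi_apply, star_sum, star_mul']
      rw [Finset.sum_comm]
      refine Finset.sum_congr rfl fun i _ => Finset.sum_congr rfl fun j _ => ?_
      rw [hM.1.apply, hC.1.apply]
    · intro v
      rw [key_quad n k Φ M B hMe v]
      exact Finset.sum_nonneg fun r _ => hC.dotProduct_mulVec_nonneg _
end

section
/- Let V : ℂ^n → ℂ^n ⊗ ℂ^m be an isometry and let ω ∈ ℂ^m be a unit vector. Then there exists a unitary matrix U on ℂ^n ⊗ ℂ^m such that U(x ⊗ ω) = V x for all x ∈ ℂ^n; consequently Tr_E( V ρ V† ) = Tr_E( U (ρ ⊗ |ω⟩⟨ω|) U† ) for all ρ ∈ M_n(ℂ). -/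
open scoped ComplexOrder

open Matrix

open scoped InnerProductSpace in
/-- Any isometry from `ℂ^n` into `ℂ^{n×m}` extends to an orthonormal basis of columns. -/
lemma exists_onb_of_isometry (n m : ℕ) [NeZero m]
    (M : Matrix (Fin n × Fin m) (Fin n) ℂ) (hM : Mᴴ * M = 1) :
    ∃ b : OrthonormalBasis (Fin n × Fin m) ℂ (EuclideanSpace ℂ (Fin n × Fin m)),
      ∀ j : Fin n, b (j, 0) = (WithLp.equiv 2 _).symm (fun p => M p j) := by
  classical
  set v : Fin n × Fin m → EuclideanSpace ℂ (Fin n × Fin m) :=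
    fun q => (WithLp.equiv 2 _).symm (fun p => M p q.1) with hv
  have horth : Orthonormal ℂ (Set.restrict {q : Fin n × Fin m | q.2 = 0} v) := by
    rw [orthonormal_iff_ite]
    rintro ⟨⟨i, i2⟩, hi⟩ ⟨⟨j, j2⟩, hj⟩
    simp only [Set.mem_setOf_eq] at hi hj
    subst hi; subst hj
    have h1 : ⟪v (i, 0), v (j, 0)⟫_ℂ = (Mᴴ * M) i j := by
      rw [hv]
      simp [EuclideanSpace.inner_toLp_toLp, dotProduct, Matrix.mul_apply,
        Matrix.conjTranspose_apply, mul_comm]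
    change ⟪v (i, 0), v (j, 0)⟫_ℂ = _
    simp only [Set.restrict_apply, h1, hM, Matrix.one_apply]
    by_cases h : i = j <;> simp [h, Subtype.ext_iff, Prod.ext_iff]
  obtain ⟨b, hb⟩ := horth.exists_orthonormalBasis_extension_of_card_eq
    (by simp [finrank_euclideanSpace])
  exact ⟨b, fun j => hb (j, 0) rfl⟩

/-- Two isometries into the same space differ by a unitary. -/
lemma exists_unitary_of_isometries (n m : ℕ) [NeZero m]
    (V W : Matrix (Fin n × Fin m) (Fin n) ℂ)
    (hV : Vᴴ * V = 1) (hW : Wᴴ * W = 1) :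
    ∃ U : Matrix (Fin n × Fin m) (Fin n × Fin m) ℂ,
      Uᴴ * U = 1 ∧ U * Uᴴ = 1 ∧ U * W = V := by
  classical
  obtain ⟨bV, hbV⟩ := exists_onb_of_isometry n m V hV
  obtain ⟨bW, hbW⟩ := exists_onb_of_isometry n m W hW
  set A : Matrix (Fin n × Fin m) (Fin n × Fin m) ℂ :=
    Matrix.of fun p q => (WithLp.equiv 2 _) (bV q) p with hA
  set B : Matrix (Fin n × Fin m) (Fin n × Fin m) ℂ :=
    Matrix.of fun p q => (WithLp.equiv 2 _) (bW q) p with hB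
  have inner_eq : ∀ (b : OrthonormalBasis (Fin n × Fin m) ℂ (EuclideanSpace ℂ (Fin n × Fin m)))
      (x : EuclideanSpace ℂ (Fin n × Fin m)) (q : Fin n × Fin m),
      inner ℂ (b q) x = ∑ p, star ((WithLp.equiv 2 _) (b q) p) * (WithLp.equiv 2 _) x p := by
    intro b x q
    rw [EuclideanSpace.inner_eq_star_dotProduct]
    exact Finset.sum_congr rfl fun p _ => mul_comm _ _
  have hAo : Aᴴ * A = 1 := by
    ext q q'
    have : (Aᴴ * A) q q' = inner ℂ (bV q) (bV q') := by
      rw [inner_eq]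
      simp [Matrix.mul_apply, Matrix.conjTranspose_apply, hA]
    rw [this, orthonormal_iff_ite.mp bV.orthonormal, Matrix.one_apply]
  have hBo : Bᴴ * B = 1 := by
    ext q q'
    have : (Bᴴ * B) q q' = inner ℂ (bW q) (bW q') := by
      rw [inner_eq]
      simp [Matrix.mul_apply, Matrix.conjTranspose_apply, hB]
    rw [this, orthonormal_iff_ite.mp bW.orthonormal, Matrix.one_apply]
  have hAo' : A * Aᴴ = 1 := mul_eq_one_comm.mp hAo
  have hBo' : B * Bᴴ = 1 := mul_eq_one_comm.mp hBo
  refine ⟨A * Bᴴ, ?_, ?_, ?_⟩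
  · calc (A * Bᴴ)ᴴ * (A * Bᴴ) = B * (Aᴴ * A) * Bᴴ := by
          simp [Matrix.conjTranspose_mul, Matrix.mul_assoc]
    _ = 1 := by rw [hAo, Matrix.mul_one, hBo']
  · calc (A * Bᴴ) * (A * Bᴴ)ᴴ = A * (Bᴴ * B) * Aᴴ := by
          simp [Matrix.conjTranspose_mul, Matrix.mul_assoc]
    _ = 1 := by rw [hBo, Matrix.mul_one, hAo']
  · have hBW : Bᴴ * W = Matrix.of fun (q : Fin n × Fin m) (j : Fin n) =>
        if q = (j, 0) then 1 else 0 := by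
      ext q j
      have h1 : (Bᴴ * W) q j = inner ℂ (bW q) (bW (j, 0)) := by
        rw [hbW j, inner_eq]
        simp [Matrix.mul_apply, Matrix.conjTranspose_apply, hB]
      rw [h1, orthonormal_iff_ite.mp bW.orthonormal]
      rfl
    rw [Matrix.mul_assoc, hBW]
    ext p j
    have hA1 : A p (j, 0) = V p j := by
      rw [hA]
      simp [hbV j]
    rw [Matrix.mul_apply]
    calc ∑ q, A p q * (if q = (j, 0) then 1 else 0) = A p (j, 0) := by
          simp
    _ = V p j := hA1

theorem isometry_extends_to_unitary_dilation (n m : ℕ)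
    (V : Matrix (Fin n × Fin m) (Fin n) ℂ) (hV : Vᴴ * V = 1)
    (ω : Fin m → ℂ) (hω : IsUnitVec ω) :
    ∃ U : Matrix (Fin n × Fin m) (Fin n × Fin m) ℂ, IsUnitaryMat U ∧
      (∀ x : Fin n → ℂ, U.mulVec (fun p => x p.1 * ω p.2) = V.mulVec x) ∧
      ∀ ρ : Matrix (Fin n) (Fin n) ℂ,
        ptraceE n m (V * ρ * Vᴴ) = ptraceE n m (U * tensorState n m ρ ω * Uᴴ) := by
  classical
  haveI : NeZero m := by
    constructor
    intro hm
    subst hm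
    simp [IsUnitVec] at hω
  set W : Matrix (Fin n × Fin m) (Fin n) ℂ :=
    Matrix.of fun p j => if p.1 = j then ω p.2 else 0 with hWdef
  have hW : Wᴴ * W = 1 := by
    ext i j
    simp only [Matrix.mul_apply, Matrix.conjTranspose_apply, hWdef, Matrix.of_apply,
      Matrix.one_apply]
    rw [Fintype.sum_prod_type]
    by_cases h : i = j
    · subst h
      rw [if_pos rfl, Finset.sum_comm, ← hω]
      refine Finset.sum_congr rfl fun k _ => ?_
      simp [apply_ite (star : ℂ → ℂ)]
    · rw [if_neg h]
      refine Finset.sum_eq_zero fun a _ => Finset.sum_eq_zero fun k _ => ?_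
      by_cases haj : a = j
      · by_cases hai : a = i
        · exact absurd (hai.symm.trans haj) h
        · simp [hai]
      · simp [haj]
  obtain ⟨U, hU1, hU2, hUW⟩ := exists_unitary_of_isometries n m V W hV hW
  have hWmul : ∀ x : Fin n → ℂ, W.mulVec x = fun p => x p.1 * ω p.2 := by
    intro x
    funext p
    simp [Matrix.mulVec, dotProduct, hWdef, mul_comm]
  have hTS : ∀ ρ : Matrix (Fin n) (Fin n) ℂ, W * ρ * Wᴴ = tensorState n m ρ ω := by
    intro ρ
    ext p q
    simp only [Matrix.mul_apply, Matrix.conjTranspose_apply, hWdef, Matrix.of_apply,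
      tensorState]
    simp [apply_ite (star : ℂ → ℂ), ite_mul, mul_ite, zero_mul, mul_zero]
    ring
  refine ⟨U, ⟨hU1, hU2⟩, ?_, ?_⟩
  · intro x
    rw [← hWmul x, Matrix.mulVec_mulVec, hUW]
  · intro ρ
    have : U * tensorState n m ρ ω * Uᴴ = V * ρ * Vᴴ := by
      rw [← hTS, ← hUW]
      simp only [Matrix.conjTranspose_mul, Matrix.mul_assoc]
    rw [this]
end
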